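/- Let a, b ∈ ℂ with |a|² + |b|² = 1 and let U := [[a, −conj(b)], [b, conj(a)]] ∈ SU(2), and let θ ∈ ℝ. Then the (2,1) entry of the first Reichardt iterate U₁ has modulus |b| · |1 − (2 − 2cos θ)(1 − |b|²)|. -/

import Mathlib

open Complex Matrix

/-- The z-rotation `D(θ) = diag(e^{iθ/2}, e^{-iθ/2})`. -/
noncomputable def Dmat (θ : ℝ) : Matrix (Fin 2) (Fin 2) ℂ :=
  !![Complex.exp (Complex.I * θ / 2), 0; 0, Complex.exp (-(Complex.I * θ / 2))]

/-- The Reichardt iteration `U₀ = U`, `U_{k+1} = U_k D(θ) U_k⁻¹ D(θ) U_k D(θ)⁻²`. -/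
noncomputable def reichardt (θ : ℝ) (U : Matrix (Fin 2) (Fin 2) ℂ) :
    ℕ → Matrix (Fin 2) (Fin 2) ℂ
  | 0 => U
  | k + 1 =>
      reichardt θ U k * Dmat θ * (reichardt θ U k)⁻¹ * Dmat θ * reichardt θ U k *
        (Dmat θ ^ 2)⁻¹

/-- For `U = [[a, -conj b],[b, conj a]] ∈ SU(2)`, the `(2,1)` entry of the first Reichardt
iterate has modulus `|b|·|1 − (2 − 2cos θ)(1 − |b|²)|`. -/
theorem reichardt_one_offdiag_abs (a b : ℂ)
    (h : ‖a‖ ^ 2 + ‖b‖ ^ 2 = 1) (θ : ℝ) :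
    ‖(reichardt θ !![a, -(starRingEnd ℂ b); b, starRingEnd ℂ a] 1) 1 0‖ =
      ‖b‖ * |1 - (2 - 2 * Real.cos θ) * (1 - ‖b‖ ^ 2)| := by
  have hn : a * starRingEnd ℂ a + b * starRingEnd ℂ b = 1 := by
    rw [Complex.mul_conj, Complex.mul_conj, ← Complex.ofReal_add,
      ← Complex.sq_norm, ← Complex.sq_norm, h]
    norm_num
  have hUinv : (!![a, -(starRingEnd ℂ b); b, starRingEnd ℂ a])⁻¹ =
      !![starRingEnd ℂ a, starRingEnd ℂ b; -b, a] := by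
    rw [Matrix.inv_def, Matrix.det_fin_two_of, Matrix.adjugate_fin_two_of,
      show a * starRingEnd ℂ a - -starRingEnd ℂ b * b = 1 by linear_combination hn]
    simp
  have hDsq : Dmat θ ^ 2 = !![Complex.exp (Complex.I * θ), 0; 0,
      Complex.exp (-(Complex.I * θ))] := by
    rw [pow_two, Dmat, Matrix.mul_fin_two, ← Complex.exp_add, ← Complex.exp_add]
    norm_num
    ring_nf
  have hDinv : (Dmat θ ^ 2)⁻¹ = !![Complex.exp (-(Complex.I * θ)), 0; 0,
      Complex.exp (Complex.I * θ)] := by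
    rw [hDsq, Matrix.inv_def, Matrix.det_fin_two_of, Matrix.adjugate_fin_two_of,
      show Complex.exp (Complex.I * θ) * Complex.exp (-(Complex.I * θ)) - 0 * 0 = 1 by
        rw [← Complex.exp_add]; norm_num]
    simp [mul_comm]
  have hstep : reichardt θ !![a, -(starRingEnd ℂ b); b, starRingEnd ℂ a] 1 =
      !![a, -(starRingEnd ℂ b); b, starRingEnd ℂ a] * Dmat θ *
        (!![a, -(starRingEnd ℂ b); b, starRingEnd ℂ a])⁻¹ * Dmat θ *
        !![a, -(starRingEnd ℂ b); b, starRingEnd ℂ a] * (Dmat θ ^ 2)⁻¹ := rfl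
  rw [hstep, hUinv, hDinv, Dmat, Matrix.mul_fin_two, Matrix.mul_fin_two,
    Matrix.mul_fin_two, Matrix.mul_fin_two, Matrix.mul_fin_two]
  simp only [Matrix.cons_val', Matrix.cons_val_one, Matrix.head_cons, Matrix.cons_val_zero,
    Matrix.empty_val', Matrix.cons_val_fin_one, Matrix.head_fin_const, Matrix.of_apply]
  have habs : ∀ (z : ℂ) (r : ℝ), z = b * (r : ℂ) * Complex.exp (-(Complex.I * θ)) →
      ‖z‖ = ‖b‖ * |r| := by
    intro z r hz
    rw [hz, norm_mul, norm_mul, Complex.norm_real, Complex.norm_exp]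
    simp
  apply habs
  have hb : ((‖b‖ : ℝ) : ℂ) ^ 2 = b * starRingEnd ℂ b := by
    rw [← Complex.ofReal_pow, Complex.sq_norm]
    exact (Complex.mul_conj b).symm
  have hE : Complex.exp (Complex.I * ↑θ / 2) ≠ 0 := Complex.exp_ne_zero _
  have hF : Complex.exp (-(Complex.I * ↑θ / 2)) = (Complex.exp (Complex.I * ↑θ / 2))⁻¹ :=
    Complex.exp_neg _
  have hH : Complex.exp (Complex.I * ↑θ) =
      Complex.exp (Complex.I * ↑θ / 2) * Complex.exp (Complex.I * ↑θ / 2) := by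
    rw [← Complex.exp_add]; ring_nf
  have hG : Complex.exp (-(Complex.I * ↑θ)) =
      (Complex.exp (Complex.I * ↑θ / 2) * Complex.exp (Complex.I * ↑θ / 2))⁻¹ := by
    rw [← hH]; exact Complex.exp_neg _
  have h1 : Complex.exp ((θ : ℂ) * Complex.I) =
      Complex.exp (Complex.I * ↑θ / 2) * Complex.exp (Complex.I * ↑θ / 2) := by
    rw [← Complex.exp_add]; congr 1; ring
  have h2 : Complex.exp (-(θ : ℂ) * Complex.I) =
      (Complex.exp (Complex.I * ↑θ / 2) * Complex.exp (Complex.I * ↑θ / 2))⁻¹ := by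
    rw [show (-(θ : ℂ) * Complex.I) = -((θ : ℂ) * Complex.I) by ring, Complex.exp_neg, h1]
  have hcos : Complex.cos (θ : ℂ) =
      (Complex.exp (Complex.I * ↑θ / 2) * Complex.exp (Complex.I * ↑θ / 2) +
        (Complex.exp (Complex.I * ↑θ / 2) * Complex.exp (Complex.I * ↑θ / 2))⁻¹) / 2 := by
    rw [Complex.cos, h1, h2]
  push_cast
  rw [hcos, hb, hF, hG]
  field_simp
  linear_combination (b * (Complex.exp (Complex.I * ↑θ / 2) ^ 4 -
    Complex.exp (Complex.I * ↑θ / 2) ^ 2 + 1)) * hn
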